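/- Let φ : ℝ → ℝ be a C³, 2π-periodic solution of φ̈ + |φ|^{1/2}φ = 0 that is odd, satisfies φ(τ+π) = −φ(τ), and φ(τ) ≥ 0 on [0,π]. Let g : ℝ → ℝ be the 2π-periodic function defined by g(τ) = (1/π)φ̇(0) − φ̈(τ) for τ ∈ [−π,0) and g(τ) = (1/π)φ̇(0) for τ ∈ [0,π). Then for every q ∈ [0,π/2], ∫₀^{π} φ̈(τ) g(τ+2q) dτ = −(2/π)(φ̇(0))² + I(q), where I(q) := −∫_{π−2q}^{π} φ̈(τ) φ̈(τ+2q) dτ. -/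

import Mathlib

open Real

/-- The coupling coefficient `M₁`: with `g = ż₊` the derivative of the explicit
zero-mean periodic solution of `z̈ = V''(φ)φ̇`, one has
`∫₀^π φ̈(τ) g(τ+2q) dτ = -(2/π)φ̇(0)² + I(q)` for `q ∈ [0, π/2]`, where
`I(q) = -∫_{π-2q}^{π} φ̈(τ)φ̈(τ+2q) dτ`. -/
theorem coefficient_M1_formula
    (φ : ℝ → ℝ) (hφ : ContDiff ℝ 3 φ)
    (hper : Function.Periodic φ (2 * π))
    (hode : ∀ τ, deriv (deriv φ) τ + |φ τ| ^ ((1:ℝ)/2) * φ τ = 0)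
    (hodd : ∀ τ, φ (-τ) = -φ τ)
    (hanti : ∀ τ, φ (τ + π) = -φ τ)
    (hpos : ∀ τ ∈ Set.Icc (0:ℝ) π, 0 ≤ φ τ)
    (g : ℝ → ℝ) (hgper : Function.Periodic g (2 * π))
    (hg1 : ∀ τ ∈ Set.Ico (-π) (0:ℝ),
      g τ = (1/π) * deriv φ 0 - deriv (deriv φ) τ)
    (hg2 : ∀ τ ∈ Set.Ico (0:ℝ) π, g τ = (1/π) * deriv φ 0) :
    ∀ q ∈ Set.Icc (0:ℝ) (π/2),
      (∫ τ in (0:ℝ)..π, deriv (deriv φ) τ * g (τ + 2 * q))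
        = -(2/π) * (deriv φ 0) ^ 2
          + (-(∫ τ in (π - 2 * q)..π,
              deriv (deriv φ) τ * deriv (deriv φ) (τ + 2 * q))) := by
  intro q hq
  obtain ⟨hq0, hq2⟩ := hq
  have hπ : (0:ℝ) < π := Real.pi_pos
  set f2 := deriv (deriv φ) with hf2def
  set c := (1/π) * deriv φ 0 with hcdef
  -- basic smoothness
  have hφ3 : ContDiff ℝ (2+1) φ := by
    have : ((2:WithTop ℕ∞)+1) = 3 := by norm_num
    rw [this]; exact hφ
  have hφ2 : ContDiff ℝ 2 (deriv φ) := (contDiff_succ_iff_deriv.mp hφ3).2.2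
  have hd1 : Differentiable ℝ (deriv φ) := hφ2.differentiable (by norm_num)
  have hcf2 : Continuous f2 :=
    (contDiff_one_iff_deriv.mp (hφ2.of_le (by norm_num))).2
  -- φ 0 = 0
  have hφ0 : φ 0 = 0 := by have := hodd 0; simp at this; linarith
  -- derivative identities
  have hanti' : ∀ τ, deriv φ (τ + π) = - deriv φ τ := by
    intro τ
    have h : (fun τ => φ (τ + π)) = fun τ => -φ τ := funext hanti
    have h1 : deriv (fun τ => φ (τ + π)) τ = deriv φ (τ + π) :=
      deriv_comp_add_const φ π τ
    rw [h] at h1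
    rw [deriv.fun_neg] at h1
    linarith
  have hanti2 : ∀ τ, f2 (τ + π) = - f2 τ := by
    intro τ
    have h : (fun τ => deriv φ (τ + π)) = fun τ => -(deriv φ τ) := funext hanti'
    have h1 : deriv (fun τ => deriv φ (τ + π)) τ = f2 (τ + π) :=
      deriv_comp_add_const (deriv φ) π τ
    rw [h] at h1
    rw [deriv.fun_neg] at h1
    linarith
  have per2 : ∀ τ, f2 (τ + 2*π) = f2 τ := by
    intro τ
    have h1 := hanti2 (τ + π)
    have h2 := hanti2 τ
    have : τ + π + π = τ + 2*π := by ring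
    rw [this] at h1
    rw [h1, h2]; ring
  have hf20 : f2 0 = 0 := by
    have := hode 0
    rw [hφ0] at this
    simpa using this
  have hf2π : f2 π = 0 := by
    have := hanti2 0
    simp [hf20] at this
    simpa using this
  have hf2negπ : f2 (-π) = 0 := by
    have := per2 (-π)
    rw [show -π + 2*π = π by ring] at this
    rw [← this, hf2π]
  have hf22π : f2 (2*π) = 0 := by
    have := per2 0
    rw [show (0:ℝ) + 2*π = 2*π by ring] at this
    rw [this, hf20]
  have d0π : deriv φ π = - deriv φ 0 := by simpa using hanti' 0
  -- values of g
  have gA : ∀ s, 0 ≤ s → s ≤ π → g s = c := by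
    intro s h0 h1
    rcases lt_or_eq_of_le h1 with h | h
    · exact hg2 s ⟨h0, h⟩
    · have e1 : g (-π + 2*π) = g (-π) := hgper (-π)
      rw [show -π + 2*π = π by ring] at e1
      rw [h, e1, hg1 (-π) ⟨le_refl _, by linarith⟩, hf2negπ, sub_zero]
  have gB : ∀ s, π ≤ s → s ≤ 2*π → g s = c - f2 s := by
    intro s h0 h1
    rcases lt_or_eq_of_le h1 with h | h
    · have e1 : g (s - 2*π + 2*π) = g (s - 2*π) := hgper (s - 2*π)
      rw [show s - 2*π + 2*π = s by ring] at e1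
      have e2 : f2 s = f2 (s - 2*π) := by
        have := per2 (s - 2*π)
        rw [show s - 2*π + 2*π = s by ring] at this
        exact this
      rw [e1, hg1 (s - 2*π) ⟨by linarith, by linarith⟩, ← e2]
    · have e1 : g ((0:ℝ) + 2*π) = g 0 := hgper 0
      rw [show (0:ℝ) + 2*π = 2*π by ring] at e1
      rw [h, e1, hg2 0 ⟨le_refl _, hπ⟩, hf22π, sub_zero]
  -- pointwise identities for the integrands on the two subintervals
  have hle1 : (0:ℝ) ≤ π - 2*q := by linarith
  have hle2 : π - 2*q ≤ π := by linarith
  have hA : Set.EqOn (fun τ => f2 τ * g (τ + 2*q))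
      (fun τ => f2 τ * c) (Set.uIcc 0 (π - 2*q)) := by
    intro τ hτ
    rw [Set.uIcc_of_le hle1] at hτ
    obtain ⟨h0, h1⟩ := hτ
    simp only
    rw [gA (τ + 2*q) (by linarith) (by linarith)]
  have hB : Set.EqOn (fun τ => f2 τ * g (τ + 2*q))
      (fun τ => f2 τ * c - f2 τ * f2 (τ + 2*q)) (Set.uIcc (π - 2*q) π) := by
    intro τ hτ
    rw [Set.uIcc_of_le hle2] at hτ
    obtain ⟨h0, h1⟩ := hτ
    simp only
    rw [gB (τ + 2*q) (by linarith) (by linarith)]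
    ring
  -- continuity facts
  have hcshift : Continuous (fun τ => f2 (τ + 2*q)) :=
    hcf2.comp (continuous_id.add continuous_const)
  have contA : Continuous (fun τ => f2 τ * c) := hcf2.mul continuous_const
  have contB : Continuous (fun τ => f2 τ * c - f2 τ * f2 (τ + 2*q)) :=
    contA.sub (hcf2.mul hcshift)
  -- integrability of the original integrand on the two subintervals
  have I1 : IntervalIntegrable (fun τ => f2 τ * g (τ + 2*q)) MeasureTheory.volume
      0 (π - 2*q) := by
    rw [intervalIntegrable_iff_integrableOn_Ioc_of_le hle1]
    have h := contA.intervalIntegrable (μ := MeasureTheory.volume) 0 (π - 2*q)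
    rw [intervalIntegrable_iff_integrableOn_Ioc_of_le hle1] at h
    exact h.congr_fun (fun x hx => (hA (by
      rw [Set.uIcc_of_le hle1]; exact Set.Ioc_subset_Icc_self hx)).symm)
      measurableSet_Ioc
  have I2 : IntervalIntegrable (fun τ => f2 τ * g (τ + 2*q)) MeasureTheory.volume
      (π - 2*q) π := by
    rw [intervalIntegrable_iff_integrableOn_Ioc_of_le hle2]
    have h := contB.intervalIntegrable (μ := MeasureTheory.volume) (π - 2*q) π
    rw [intervalIntegrable_iff_integrableOn_Ioc_of_le hle2] at h
    exact h.congr_fun (fun x hx => (hB (by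
      rw [Set.uIcc_of_le hle2]; exact Set.Ioc_subset_Icc_self hx)).symm)
      measurableSet_Ioc
  -- split the integral
  have hsplit : (∫ τ in (0:ℝ)..π, f2 τ * g (τ + 2*q))
      = (∫ τ in (0:ℝ)..(π - 2*q), f2 τ * g (τ + 2*q))
        + ∫ τ in (π - 2*q)..π, f2 τ * g (τ + 2*q) :=
    (intervalIntegral.integral_add_adjacent_intervals I1 I2).symm
  have eq1 : (∫ τ in (0:ℝ)..(π - 2*q), f2 τ * g (τ + 2*q))
      = ∫ τ in (0:ℝ)..(π - 2*q), f2 τ * c :=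
    intervalIntegral.integral_congr hA
  have eq2 : (∫ τ in (π - 2*q)..π, f2 τ * g (τ + 2*q))
      = ∫ τ in (π - 2*q)..π, (f2 τ * c - f2 τ * f2 (τ + 2*q)) :=
    intervalIntegral.integral_congr hB
  have eq3 : (∫ τ in (π - 2*q)..π, (f2 τ * c - f2 τ * f2 (τ + 2*q)))
      = (∫ τ in (π - 2*q)..π, f2 τ * c)
        - ∫ τ in (π - 2*q)..π, f2 τ * f2 (τ + 2*q) :=
    intervalIntegral.integral_sub (contA.intervalIntegrable (μ := MeasureTheory.volume) _ _)
      ((hcf2.mul hcshift).intervalIntegrable _ _)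
  have eq4 : (∫ τ in (0:ℝ)..(π - 2*q), f2 τ * c)
      + (∫ τ in (π - 2*q)..π, f2 τ * c) = ∫ τ in (0:ℝ)..π, f2 τ * c :=
    intervalIntegral.integral_add_adjacent_intervals
      (contA.intervalIntegrable (μ := MeasureTheory.volume) _ _) (contA.intervalIntegrable (μ := MeasureTheory.volume) _ _)
  have eq5 : (∫ τ in (0:ℝ)..π, f2 τ * c) = (∫ τ in (0:ℝ)..π, f2 τ) * c :=
    intervalIntegral.integral_mul_const c f2
  have eq6 : (∫ τ in (0:ℝ)..π, f2 τ) = deriv φ π - deriv φ 0 :=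
    intervalIntegral.integral_deriv_eq_sub (fun x _ => hd1 x)
      (hcf2.intervalIntegrable _ _)
  have eq7 : (∫ τ in (0:ℝ)..π, f2 τ) * c = -(2/π) * (deriv φ 0) ^ 2 := by
    rw [eq6, d0π, hcdef]
    field_simp
    ring
  have eq8 := eq4.trans (eq5.trans eq7)
  rw [hsplit, eq1, eq2, eq3]
  linarith [eq8]
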